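/- The language IP_* is context-free but does not belong to REG/Rn; hence CFL ⊄ REG/Rn. -/

import Mathlib

open scoped BigOperators

/-- A rational one-way probabilistic finite automaton over alphabet `Λ`
(with endmarker matrices `matC` for ¢ and `matD` for $). -/
structure PFA (Λ : Type) where
  Q : Type
  fin : Fintype Q
  dec : DecidableEq Q
  start : Q
  final : Finset Q
  matC : Matrix Q Q ℚ
  matD : Matrix Q Q ℚ
  mat : Λ → Matrix Q Q ℚ
  nonnegC : ∀ i j, 0 ≤ matC i j
  nonnegD : ∀ i j, 0 ≤ matD i j
  nonnegMat : ∀ σ i j, 0 ≤ mat σ i j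
  rowC : ∀ i, ∑ j ∈ fin.elems, matC i j = 1
  rowD : ∀ i, ∑ j ∈ fin.elems, matD i j = 1
  rowMat : ∀ σ i, ∑ j ∈ fin.elems, mat σ i j = 1

/-- Acceptance probability of a 1pfa on an input string. -/
def PFA.accProb {Λ : Type} (M : PFA Λ) (x : List Λ) : ℚ :=
  letI := M.fin
  letI := M.dec
  ∑ q ∈ M.final,
    (Matrix.vecMul
      (x.foldl (fun v σ => Matrix.vecMul v (M.mat σ))
        (Matrix.vecMul (Pi.single M.start 1) M.matC))
      M.matD) q

/-- `D` is a probability distribution on `Γ^n`. -/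
def IsDist {Γ : Type} [Fintype Γ] {n : ℕ} (D : List.Vector Γ n → ℝ) : Prop :=
  (∀ y, 0 ≤ D y) ∧ ∑ y, D y = 1

open Classical in
/-- Probability, under randomized advice `D`, that the track string `[x//y]` lies in `L`. -/
noncomputable def randAccProb {Alp Γ : Type} [Fintype Γ] (L : Set (List (Alp × Γ)))
    {n : ℕ} (D : List.Vector Γ n → ℝ) (x : List Alp) : ℝ :=
  ∑ y : List.Vector Γ n, if x.zip y.toList ∈ L then D y else 0

/-- `S ∈ REG/n`. -/
def InREGn {Alp : Type} (S : Set (List Alp)) : Prop :=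
  ∃ (Γ : Type) (_ : Fintype Γ) (h : ℕ → List Γ), (∀ n, (h n).length = n) ∧
    ∃ (Q : Type) (_ : Fintype Q) (M : DFA (Alp × Γ) Q),
      ∀ x : List Alp, x ∈ S ↔ x.zip (h x.length) ∈ M.accepts

/-- `S ∈ REG/Rn` (bounded error, randomized advice). -/
def InREGRn {Alp : Type} (S : Set (List Alp)) : Prop :=
  ∃ (Γ : Type) (iΓ : Fintype Γ),
    letI := iΓ
    ∃ (Q : Type) (_ : Fintype Q) (M : DFA (Alp × Γ) Q) (ε : ℝ),
      0 ≤ ε ∧ ε < 1 / 2 ∧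
        ∃ D : (n : ℕ) → List.Vector Γ n → ℝ, (∀ n, IsDist (D n)) ∧
          ∀ (n : ℕ) (x : List Alp), x.length = n →
            (x ∈ S → 1 - ε ≤ randAccProb M.accepts (D n) x) ∧
            (x ∉ S → randAccProb M.accepts (D n) x ≤ ε)

/-- `S ∈ CFL/n`. -/
def InCFLn {Alp : Type} (S : Set (List Alp)) : Prop :=
  ∃ (Γ : Type) (_ : Fintype Γ) (h : ℕ → List Γ), (∀ n, (h n).length = n) ∧
    ∃ L : Language (Alp × Γ), L.IsContextFree ∧
      ∀ x : List Alp, x ∈ S ↔ x.zip (h x.length) ∈ L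

/-- `S ∈ CFL/Rn` (bounded error, randomized advice). -/
def InCFLRn {Alp : Type} (S : Set (List Alp)) : Prop :=
  ∃ (Γ : Type) (iΓ : Fintype Γ),
    letI := iΓ
    ∃ (L : Language (Alp × Γ)), L.IsContextFree ∧
      ∃ (ε : ℝ), 0 ≤ ε ∧ ε < 1 / 2 ∧
        ∃ D : (n : ℕ) → List.Vector Γ n → ℝ, (∀ n, IsDist (D n)) ∧
          ∀ (n : ℕ) (x : List Alp), x.length = n →
            (x ∈ S → 1 - ε ≤ randAccProb L (D n) x) ∧
            (x ∉ S → randAccProb L (D n) x ≤ ε)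

/-- `A ∈ 1C=LIN/lin` via the paper's 1pfa characterization. -/
def InOneCeqLin {Alp : Type} (A : Set (List Alp)) : Prop :=
  ∃ (Γ : Type) (_ : Fintype Γ) (h : ℕ → List Γ), (∀ n, (h n).length = n) ∧
    ∃ M : PFA (Alp × Γ),
      ∀ x : List Alp, x ∈ A ↔ M.accProb (x.zip (h x.length)) = 1 / 2

/-- `A ∈ 1PLIN/lin` via the paper's 1pfa characterization. -/
def InOnePLin {Alp : Type} (A : Set (List Alp)) : Prop :=
  ∃ (Γ : Type) (_ : Fintype Γ) (h : ℕ → List Γ), (∀ n, (h n).length = n) ∧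
    ∃ M : PFA (Alp × Γ),
      ∀ x : List Alp, x ∈ A ↔ 1 / 2 < M.accProb (x.zip (h x.length))

open Classical in
/-- `(A, μ) ∈ aver-REG/n`. -/
def InAverREGn {Alp : Type} [Fintype Alp] (A : Set (List Alp))
    (μ : (n : ℕ) → List.Vector Alp n → ℝ) : Prop :=
  ∃ (Γ : Type) (_ : Fintype Γ) (h : ℕ → List Γ), (∀ n, (h n).length = n) ∧
    ∃ (Q : Type) (_ : Fintype Q) (M : DFA (Alp × Γ) Q) (ε : ℝ),
      0 ≤ ε ∧ ε < 1 / 2 ∧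
        ∀ n : ℕ, 1 - ε ≤ ∑ x : List.Vector Alp n,
          if (x.toList.zip (h n) ∈ M.accepts ↔ x.toList ∈ A) then μ n x else 0

/-- The language `Dup = {ww : w ∈ {0,1}*}`. -/
def Dup : Set (List Bool) := {z | ∃ w : List Bool, z = w ++ w}

/-- The marked palindrome language `Pal_# = {w#w^R}` over the alphabet
`Option Bool` (with `none` playing the role of the marker `#`). -/
def PalHash : Set (List (Option Bool)) :=
  {z | ∃ w : List Bool, z = w.map some ++ none :: (w.reverse.map some)}

/-- Inner product (number of common `true` positions) of two bit strings. -/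
def innerProd (u v : List Bool) : ℕ :=
  ((u.zip v).filter fun p => p.1 && p.2).length

/-- The language `IP_* = {axy : a ∈ {λ,0,1}, |x| = |y|, x^R ⊙ y ≡ 0 (mod 2)}`. -/
def IPstar : Language Bool :=
  {z | ∃ a x y : List Bool, (a = [] ∨ a = [false] ∨ a = [true]) ∧
    z = a ++ x ++ y ∧ x.length = y.length ∧ innerProd x.reverse y % 2 = 0}

/-- A negligible function. -/
def Negligible (f : ℕ → ℝ) : Prop :=
  ∀ k : ℕ, 0 < k → ∃ N : ℕ, ∀ n ≥ N, f n ≤ 1 / (n : ℝ) ^ k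

/-- `L` is `REG/n`-pseudorandom. -/
def RegPseudorandom {Alp : Type} [Fintype Alp] (L : Set (List Alp)) : Prop :=
  ∀ B : Set (List Alp), InREGn B →
    Negligible fun n =>
      |(((symmDiff B L) ∩ {x | x.length = n}).ncard : ℝ) /
        (Fintype.card Alp : ℝ) ^ n - 1 / 2|


namespace IPAux

lemma innerProd_cons (a b : Bool) (u v : List Bool) :
    innerProd (a::u) (b::v) = (if a && b then 1 else 0) + innerProd u v := by
  cases a <;> cases b <;> simp [innerProd, List.filter_cons, Nat.add_comm]

lemma innerProd_concat (u v : List Bool) (h : u.length = v.length) (b c : Bool) :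
    innerProd (u++[b]) (v++[c]) = innerProd u v + (if b && c then 1 else 0) := by
  unfold innerProd
  rw [List.zip_append h, List.filter_append, List.length_append]
  cases b <;> cases c <;> simp

lemma mem_IPstar_iff (u v : List Bool) (h : u.length = v.length) :
    u ++ v ∈ IPstar ↔ innerProd u.reverse v % 2 = 0 := by
  constructor
  · rintro ⟨a, x, y, ha, heq, hlen, hpar⟩
    have hae : a = [] := by
      have hl := congrArg List.length heq
      simp [List.length_append] at hl
      rcases ha with rfl | rfl | rfl
      · rfl
      all_goals (exfalso; simp at hl; omega)
    subst hae
    simp only [List.nil_append] at heq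
    have hux : u = x ∧ v = y := by
      apply List.append_inj heq
      have hl := congrArg List.length heq
      simp [List.length_append] at hl
      omega
    rcases hux with ⟨rfl, rfl⟩
    exact hpar
  · intro hpar
    exact ⟨[], u, v, Or.inl rfl, by simp, h, hpar⟩

/-- parity-form inner product over `Fin`-indexed bit vectors -/
def ipf {m : ℕ} (x z : Fin m → Bool) : ZMod 2 :=
  ∑ i, if x i && z i then 1 else 0

lemma innerProd_ofFn {m : ℕ} (x z : Fin m → Bool) :
    ((innerProd (List.ofFn x) (List.ofFn z) : ℕ) : ZMod 2) = ipf x z := by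
  induction m with
  | zero => simp [ipf, innerProd]
  | succ m ih =>
    have h2 : ipf x z = (if x 0 && z 0 then (1:ZMod 2) else 0)
        + ipf (fun i => x i.succ) (fun i => z i.succ) := by
      unfold ipf; rw [Fin.sum_univ_succ]
    rw [List.ofFn_succ, List.ofFn_succ, innerProd_cons, h2,
      ← ih (fun i => x i.succ) (fun i => z i.succ)]
    push_cast
    ring

lemma ofFn_reverse {m : ℕ} (x : Fin m → Bool) :
    (List.ofFn x).reverse = List.ofFn (fun i => x i.rev) := by
  apply List.ext_getElem
  · simp
  · intro i h1 h2
    simp only [List.getElem_reverse, List.getElem_ofFn, List.length_ofFn] at *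
    congr 1
    apply Fin.ext
    simp only [Fin.val_rev]
    omega

lemma ipf_update {m : ℕ} (x z : Fin m → Bool) (i : Fin m) (hx : x i = true) :
    ipf x (Function.update z i (!z i)) = ipf x z + 1 := by
  unfold ipf
  rw [Finset.sum_eq_add_sum_sdiff_singleton_of_mem (Finset.mem_univ i),
      Finset.sum_eq_add_sum_sdiff_singleton_of_mem (Finset.mem_univ i)
        (fun j => if x j && z j then (1 : ZMod 2) else 0)]
  have hrest : ∑ j ∈ Finset.univ \ {i}, (if x j && (Function.update z i (!z i)) j then (1 : ZMod 2) else 0)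
      = ∑ j ∈ Finset.univ \ {i}, (if x j && z j then (1 : ZMod 2) else 0) := by
    apply Finset.sum_congr rfl
    intro j hj
    have hji : j ≠ i := by simpa using (Finset.mem_sdiff.mp hj).2
    rw [Function.update_of_ne hji]
  rw [hrest, Function.update_self, hx]
  have key : (if (true && !z i) then (1:ZMod 2) else 0)
      = (if (true && z i) then (1:ZMod 2) else 0) + 1 := by
    cases z i <;> decide
  rw [key]; ring

lemma ipf_add {m : ℕ} (u u' z : Fin m → Bool) :
    ipf u z + ipf u' z = ipf (fun i => xor (u i) (u' i)) z := by
  unfold ipf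
  rw [← Finset.sum_add_distrib]
  apply Finset.sum_congr rfl
  intro i _
  have hb : (fun i => xor (u i) (u' i)) i = xor (u i) (u' i) := rfl
  rw [hb]
  cases u i <;> cases u' i <;> cases z i <;> decide

lemma sum_sign_eq_zero {m : ℕ} (u : Fin m → Bool) (i : Fin m) (hi : u i = true) :
    ∑ z : Fin m → Bool, (if ipf u z = 0 then (1:ℝ) else -1) = 0 := by
  apply Finset.sum_ninvolution (fun z => Function.update z i (!z i))
  · intro z
    have h := ipf_update u z i hi
    have hcase : ∀ a : ZMod 2, a = 0 ∨ a = 1 := by decide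
    have h11 : (1 + 1 : ZMod 2) = 0 := by decide
    rcases hcase (ipf u z) with hz | hz <;>
      rw [h, hz] <;> simp [h11]
  · intro z _
    intro hcon
    have := congrFun hcon i
    simp at this
  · intro z; exact Finset.mem_univ _
  · intro z
    have : (!(Function.update z i (!z i)) i) = z i := by simp
    rw [this, Function.update_idem]
    exact Function.update_eq_self i z

/-- sign of the reversed inner product -/
noncomputable def sgn {m : ℕ} (x z : Fin m → Bool) : ℝ :=
  if ipf (fun i => x i.rev) z = 0 then 1 else -1

lemma sgn_mul_self {m : ℕ} (x z : Fin m → Bool) : sgn x z * sgn x z = 1 := by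
  unfold sgn; by_cases h : ipf (fun i => x i.rev) z = 0 <;> simp [h]

lemma sum_sgn_diag {m : ℕ} (x : Fin m → Bool) :
    ∑ z : Fin m → Bool, sgn x z * sgn x z = 2^m := by
  rw [Finset.sum_congr rfl (fun z _ => sgn_mul_self x z)]
  simp [Finset.card_univ]

lemma sum_sgn_offdiag {m : ℕ} (x x' : Fin m → Bool) (hne : x ≠ x') :
    ∑ z : Fin m → Bool, sgn x z * sgn x' z = 0 := by
  have hpt : ∀ z, sgn x z * sgn x' z
      = (if ipf (fun i => xor (x i.rev) (x' i.rev)) z = 0 then (1:ℝ) else -1) := by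
    intro z
    rw [← ipf_add]
    unfold sgn
    have hcase : ∀ a : ZMod 2, a = 0 ∨ a = 1 := by decide
    rcases hcase (ipf (fun i => x i.rev) z) with h1 | h1 <;>
      rcases hcase (ipf (fun i => x' i.rev) z) with h2 | h2 <;>
      rw [h1, h2] <;>
        simp [show ((1:ZMod 2)+1) = 0 from by decide,
          show ((1:ZMod 2)+0) ≠ 0 from by decide, show ((0:ZMod 2)+1) ≠ 0 from by decide]
  rw [Finset.sum_congr rfl (fun z _ => hpt z)]
  obtain ⟨j, hj⟩ := Function.ne_iff.mp hne
  refine sum_sign_eq_zero _ j.rev ?_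
  simp only [Fin.rev_rev]
  cases hxj : x j <;> cases hxj' : x' j <;> simp_all

lemma sum_sgn_mul (m : ℕ) (x x' : Fin m → Bool) :
    ∑ z : Fin m → Bool, sgn x z * sgn x' z = if x = x' then (2:ℝ)^m else 0 := by
  by_cases h : x = x'
  · subst h; rw [sum_sgn_diag]; simp
  · rw [sum_sgn_offdiag x x' h]; simp [h]


section Counting
variable {n : ℕ} {Q : Type} [Fintype Q] [DecidableEq Q]

noncomputable def Sqz (f : (Fin n → Bool) → Q) (q : Q) (z : Fin n → Bool) : ℝ :=
  ∑ x : Fin n → Bool, (if f x = q then sgn x z else 0)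

lemma sum_comm3 {A B C : Type} [Fintype A] [Fintype B] [Fintype C] (F : A → B → C → ℝ) :
    ∑ a : A, ∑ b : B, ∑ c : C, F a b c = ∑ c : C, ∑ b : B, ∑ a : A, F a b c := by
  calc ∑ a : A, ∑ b : B, ∑ c : C, F a b c
      = ∑ a : A, ∑ c : C, ∑ b : B, F a b c :=
        Finset.sum_congr rfl (fun a _ => Finset.sum_comm)
    _ = ∑ c : C, ∑ a : A, ∑ b : B, F a b c := Finset.sum_comm
    _ = ∑ c : C, ∑ b : B, ∑ a : A, F a b c :=
        Finset.sum_congr rfl (fun c _ => Finset.sum_comm)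

lemma claim1 (f : (Fin n → Bool) → Q) (β : Q → (Fin n → Bool) → ℝ) :
    ∑ x : Fin n → Bool, ∑ z : Fin n → Bool, β (f x) z * sgn x z
      = ∑ q : Q, ∑ z : Fin n → Bool, β q z * Sqz f q z := by
  have step : ∀ (x z : Fin n → Bool), β (f x) z * sgn x z
      = ∑ q : Q, (if f x = q then β q z * sgn x z else 0) := by
    intro x z
    rw [Finset.sum_ite_eq Finset.univ (f x) (fun q => β q z * sgn x z)]
    simp
  simp_rw [step]
  rw [sum_comm3 (fun x z q => if f x = q then β q z * sgn x z else 0)]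
  apply Finset.sum_congr rfl; intro q _
  apply Finset.sum_congr rfl; intro z _
  unfold Sqz
  rw [Finset.mul_sum]
  apply Finset.sum_congr rfl; intro x _
  by_cases h : f x = q <;> simp [h]

lemma claim4 (f : (Fin n → Bool) → Q) :
    ∑ q : Q, ∑ z : Fin n → Bool, (Sqz f q z)^2 = (2:ℝ)^n * 2^n := by
  unfold Sqz
  have h1 : ∀ (q : Q) (z : Fin n → Bool),
      (∑ x : Fin n → Bool, (if f x = q then sgn x z else 0))^2
      = ∑ x : Fin n → Bool, ∑ x' : Fin n → Bool,
          (if f x = q ∧ f x' = q then sgn x z * sgn x' z else 0) := by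
    intro q z
    rw [sq, Finset.sum_mul_sum]
    apply Finset.sum_congr rfl; intro x _
    apply Finset.sum_congr rfl; intro x' _
    by_cases h : f x = q <;> by_cases h' : f x' = q <;> simp [h, h']
  simp_rw [h1]
  have h2 : ∀ q : Q, ∑ z : Fin n → Bool, ∑ x : Fin n → Bool, ∑ x' : Fin n → Bool,
      (if f x = q ∧ f x' = q then sgn x z * sgn x' z else 0)
      = ∑ x : Fin n → Bool, (if f x = q then (2:ℝ)^n else 0) := by
    intro q
    rw [sum_comm3 (fun z x x' => if f x = q ∧ f x' = q then sgn x z * sgn x' z else 0)]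
    rw [Finset.sum_comm]
    apply Finset.sum_congr rfl; intro x _
    have h3 : ∀ x' : Fin n → Bool, ∑ z : Fin n → Bool,
        (if f x = q ∧ f x' = q then sgn x z * sgn x' z else 0)
        = if x = x' then (if f x = q then (2:ℝ)^n else 0) else 0 := by
      intro x'
      by_cases h : f x = q ∧ f x' = q
      · rw [Finset.sum_congr rfl (fun z _ => if_pos h), sum_sgn_mul]
        by_cases he : x = x'
        · subst he; simp [h.1]
        · simp [he]
      · rw [Finset.sum_congr rfl (fun z _ => if_neg h)]
        by_cases he : x = x'
        · subst he
          have : ¬ f x = q := fun hc => h ⟨hc, hc⟩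
          simp [this]
        · simp [he]
    rw [Finset.sum_congr rfl (fun x' _ => h3 x')]
    rw [Finset.sum_ite_eq Finset.univ x (fun _ => (if f x = q then (2:ℝ)^n else 0))]
    simp
  rw [Finset.sum_congr rfl (fun q _ => h2 q)]
  rw [Finset.sum_comm]
  have h4 : ∀ x : Fin n → Bool, ∑ q : Q, (if f x = q then (2:ℝ)^n else 0) = (2:ℝ)^n := by
    intro x
    rw [Finset.sum_ite_eq Finset.univ (f x) (fun _ => (2:ℝ)^n)]
    simp
  rw [Finset.sum_congr rfl (fun x _ => h4 x)]
  simp [Finset.card_univ, mul_comm]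

lemma counting (f : (Fin n → Bool) → Q) (β : Q → (Fin n → Bool) → ℝ)
    (hβ : ∀ q z, β q z = 1 ∨ β q z = -1) :
    ∑ x : Fin n → Bool, ∑ z : Fin n → Bool, β (f x) z * sgn x z
      ≤ Real.sqrt ((Fintype.card Q * 2^n) * (2^n * 2^n)) := by
  rw [claim1 f β]
  have habs : ∑ q : Q, ∑ z : Fin n → Bool, β q z * Sqz f q z
      ≤ ∑ q : Q, ∑ z : Fin n → Bool, |Sqz f q z| := by
    apply Finset.sum_le_sum; intro q _
    apply Finset.sum_le_sum; intro z _
    calc β q z * Sqz f q z ≤ |β q z * Sqz f q z| := le_abs_self _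
    _ = |Sqz f q z| := by
        rw [abs_mul]
        rcases hβ q z with h | h <;> simp [h]
  refine habs.trans ?_
  have hCS : (∑ q : Q, ∑ z : Fin n → Bool, |Sqz f q z|)^2
      ≤ ((Fintype.card Q * 2^n) * (2^n * 2^n) : ℝ) := by
    rw [← Finset.sum_product']
    calc (∑ p ∈ (Finset.univ ×ˢ Finset.univ : Finset (Q × (Fin n → Bool))), |Sqz f p.1 p.2|)^2
        = (∑ p ∈ (Finset.univ ×ˢ Finset.univ : Finset (Q × (Fin n → Bool))),
            (1 : ℝ) * |Sqz f p.1 p.2|)^2 := by simp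
      _ ≤ (∑ _p ∈ (Finset.univ ×ˢ Finset.univ : Finset (Q × (Fin n → Bool))), (1:ℝ)^2)
          * ∑ p ∈ (Finset.univ ×ˢ Finset.univ : Finset (Q × (Fin n → Bool))), |Sqz f p.1 p.2|^2 :=
          Finset.sum_mul_sq_le_sq_mul_sq _ _ _
      _ = ((Fintype.card Q * 2^n) * (2^n * 2^n) : ℝ) := by
          have e1 : ∑ _p ∈ (Finset.univ ×ˢ Finset.univ : Finset (Q × (Fin n → Bool))), (1:ℝ)^2
              = (Fintype.card Q * 2^n : ℝ) := by
            rw [Finset.sum_const]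
            simp [Finset.card_univ, Fintype.card_fun]
          have e2 : ∑ p ∈ (Finset.univ ×ˢ Finset.univ : Finset (Q × (Fin n → Bool))),
              |Sqz f p.1 p.2|^2 = (2:ℝ)^n * 2^n := by
            rw [Finset.sum_product]
            simp_rw [sq_abs]
            exact claim4 f
          rw [e1, e2]
  have hnn : (0:ℝ) ≤ ∑ q : Q, ∑ z : Fin n → Bool, |Sqz f q z| := by
    apply Finset.sum_nonneg; intro q _
    apply Finset.sum_nonneg; intro z _
    exact abs_nonneg _
  calc ∑ q : Q, ∑ z : Fin n → Bool, |Sqz f q z|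
      = Real.sqrt ((∑ q : Q, ∑ z : Fin n → Bool, |Sqz f q z|)^2) := by
        rw [Real.sqrt_sq hnn]
    _ ≤ Real.sqrt ((Fintype.card Q * 2^n) * (2^n * 2^n)) := Real.sqrt_le_sqrt hCS


end Counting

lemma sum_comm3' {A B C : Type} [Fintype A] [Fintype B] [Fintype C] (F : A → B → C → ℝ) :
    ∑ a : A, ∑ b : B, ∑ c : C, F a b c = ∑ c : C, ∑ a : A, ∑ b : B, F a b c := by
  calc ∑ a : A, ∑ b : B, ∑ c : C, F a b c
      = ∑ a : A, ∑ c : C, ∑ b : B, F a b c :=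
        Finset.sum_congr rfl (fun a _ => Finset.sum_comm)
    _ = ∑ c : C, ∑ a : A, ∑ b : B, F a b c := Finset.sum_comm

lemma mem_IPstar_ofFn {n : ℕ} (x z : Fin n → Bool) :
    (List.ofFn x ++ List.ofFn z ∈ IPstar) ↔ ipf (fun i => x i.rev) z = 0 := by
  rw [mem_IPstar_iff _ _ (by simp), ofFn_reverse]
  have h1 : innerProd (List.ofFn fun i => x i.rev) (List.ofFn z) % 2 = 0
      ↔ ((innerProd (List.ofFn fun i => x i.rev) (List.ofFn z) : ℕ) : ZMod 2) = 0 := by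
    rw [ZMod.natCast_eq_zero_iff]
    omega
  rw [h1, innerProd_ofFn]

theorem not_REGRn : ¬ InREGRn IPstar := by
  rintro ⟨Γ, iΓ, Q, iQ, M, ε, hε0, hεh, D, hD, hcor⟩
  classical
  obtain ⟨δ, hδdef⟩ : ∃ δ : ℝ, δ = 1/2 - ε := ⟨_, rfl⟩
  have hδ : 0 < δ := by rw [hδdef]; linarith
  set K : ℕ := Fintype.card Q with hK
  obtain ⟨n, hn⟩ := pow_unbounded_of_one_lt ((K:ℝ) / (4*δ^2)) (by norm_num : (1:ℝ) < 2)
  have hKn : (K:ℝ) < 4*δ^2 * 2^n := by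
    rw [div_lt_iff₀ (by positivity)] at hn
    calc (K:ℝ) < 2^n * (4*δ^2) := hn
    _ = 4*δ^2 * 2^n := by ring
  -- notation
  obtain ⟨H, hHdef⟩ : ∃ H : ℝ, H = 2^n * 2^n := ⟨_, rfl⟩
  have hH0 : (0:ℝ) < H := by rw [hHdef]; positivity
  -- per-advice one-way structure
  set fw : List.Vector Γ (n+n) → (Fin n → Bool) → Q := fun w x => M.eval ((List.ofFn x).zip (w.toList.take n)) with hfw
  set βw : List.Vector Γ (n+n) → Q → (Fin n → Bool) → ℝ := fun w q z =>
    if M.evalFrom q ((List.ofFn z).zip (w.toList.drop n)) ∈ M.accept then 1 else -1 with hβw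
  have hsplit : ∀ (w : List.Vector Γ (n+n)) (x z : Fin n → Bool),
      ((List.ofFn x ++ List.ofFn z).zip w.toList ∈ M.accepts)
        ↔ M.evalFrom (fw w x) ((List.ofFn z).zip (w.toList.drop n)) ∈ M.accept := by
    intro w x z
    have hlenw : w.toList.length = n + n := w.2
    have htd : w.toList = w.toList.take n ++ w.toList.drop n := (List.take_append_drop n _).symm
    have hzip : (List.ofFn x ++ List.ofFn z).zip w.toList
        = (List.ofFn x).zip (w.toList.take n) ++ (List.ofFn z).zip (w.toList.drop n) := by
      conv_lhs => rw [htd]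
      exact List.zip_append (by simp [hlenw])
    rw [hzip, DFA.mem_accepts, DFA.eval, DFA.evalFrom_of_append]
    rfl
  -- membership sign
  have hmem : ∀ x z : Fin n → Bool, (List.ofFn x ++ List.ofFn z ∈ IPstar) ↔ ipf (fun i => x i.rev) z = 0 :=
    mem_IPstar_ofFn
  -- pointwise correctness inequality
  have key : ∀ x z : Fin n → Bool, 1 - ε ≤ ∑ w : List.Vector Γ (n+n), (D (n+n) w) *
      (if (((List.ofFn x ++ List.ofFn z).zip w.toList ∈ M.accepts)
          ↔ (List.ofFn x ++ List.ofFn z ∈ IPstar)) then 1 else 0) := by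
    intro x z
    have hlen : (List.ofFn x ++ List.ofFn z).length = n + n := by simp
    have hc := hcor (n+n) (List.ofFn x ++ List.ofFn z) hlen
    by_cases hm : List.ofFn x ++ List.ofFn z ∈ IPstar
    · have h1 := hc.1 hm
      have : randAccProb M.accepts (D (n+n)) (List.ofFn x ++ List.ofFn z)
          = ∑ w : List.Vector Γ (n+n), (D (n+n) w) *
            (if (((List.ofFn x ++ List.ofFn z).zip w.toList ∈ M.accepts) ↔
              (List.ofFn x ++ List.ofFn z ∈ IPstar)) then 1 else 0) := by
        unfold randAccProb
        apply Finset.sum_congr rfl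
        intro w _
        by_cases ha : (List.ofFn x ++ List.ofFn z).zip w.toList ∈ M.accepts <;>
          simp [ha, hm] <;> intro h <;> contradiction
      rw [← this]; exact h1
    · have h1 := hc.2 hm
      have hsum : ∑ w : List.Vector Γ (n+n), D (n+n) w = 1 := (hD (n+n)).2
      have heq : ∑ w : List.Vector Γ (n+n), (D (n+n) w) *
            (if (((List.ofFn x ++ List.ofFn z).zip w.toList ∈ M.accepts) ↔
              (List.ofFn x ++ List.ofFn z ∈ IPstar)) then 1 else 0)
          = ∑ w : List.Vector Γ (n+n), ((D (n+n) w) -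
            (if ((List.ofFn x ++ List.ofFn z).zip w.toList ∈ M.accepts)
              then D (n+n) w else 0)) := by
        apply Finset.sum_congr rfl
        intro w _
        by_cases ha : (List.ofFn x ++ List.ofFn z).zip w.toList ∈ M.accepts <;>
          simp [ha, hm]
      rw [heq, Finset.sum_sub_distrib, hsum]
      have : randAccProb M.accepts (D (n+n)) (List.ofFn x ++ List.ofFn z)
          = ∑ w : List.Vector Γ (n+n),
            (if ((List.ofFn x ++ List.ofFn z).zip w.toList ∈ M.accepts)
              then D (n+n) w else 0) := rfl
      rw [← this]
      linarith
  -- sum over all x z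
  have hcardV : (Finset.univ : Finset (Fin n → Bool)).card = 2^n := by
    simp [Finset.card_univ, Fintype.card_fun]
  have total : (1 - ε) * H ≤ ∑ x : Fin n → Bool, ∑ z : Fin n → Bool, ∑ w : List.Vector Γ (n+n), (D (n+n) w) *
      (if (((List.ofFn x ++ List.ofFn z).zip w.toList ∈ M.accepts)
          ↔ (List.ofFn x ++ List.ofFn z ∈ IPstar)) then 1 else 0) := by
    have : ∑ x : Fin n → Bool, ∑ z : Fin n → Bool, (1 - ε : ℝ) = (1-ε) * H := by
      rw [Finset.sum_const, Finset.sum_const, hcardV]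
      simp [hHdef]; ring
    rw [← this]
    exact Finset.sum_le_sum (fun x _ => Finset.sum_le_sum (fun z _ => key x z))
  -- swap and bound per advice
  obtain ⟨B, hBdef⟩ : ∃ B : ℝ, B = H/2 + (1/2) * Real.sqrt ((K * 2^n) * H) := ⟨_, rfl⟩
  have perw : ∀ w : List.Vector Γ (n+n), ∑ x : Fin n → Bool, ∑ z : Fin n → Bool,
      (if (((List.ofFn x ++ List.ofFn z).zip w.toList ∈ M.accepts)
          ↔ (List.ofFn x ++ List.ofFn z ∈ IPstar)) then (1:ℝ) else 0) ≤ B := by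
    intro w
    have hχ : ∀ x z : Fin n → Bool, (if (((List.ofFn x ++ List.ofFn z).zip w.toList ∈ M.accepts)
          ↔ (List.ofFn x ++ List.ofFn z ∈ IPstar)) then (1:ℝ) else 0)
        = (1 + (βw w) (fw w x) z * sgn x z) / 2 := by
      intro x z
      have hβval : (βw w) (fw w x) z
          = if ((List.ofFn x ++ List.ofFn z).zip w.toList ∈ M.accepts) then (1:ℝ) else -1 := by
        simp only [hβw]
        by_cases h : (List.ofFn x ++ List.ofFn z).zip w.toList ∈ M.accepts
        · rw [if_pos ((hsplit w x z).mp h), if_pos h]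
        · rw [if_neg (fun hc => h ((hsplit w x z).mpr hc)), if_neg h]
      have hsval : sgn x z = if (List.ofFn x ++ List.ofFn z ∈ IPstar) then (1:ℝ) else -1 := by
        unfold sgn
        by_cases h : List.ofFn x ++ List.ofFn z ∈ IPstar
        · rw [if_pos ((hmem x z).mp h), if_pos h]
        · rw [if_neg (fun hc => h ((hmem x z).mpr hc)), if_neg h]
      rw [hβval, hsval]
      by_cases ha : (List.ofFn x ++ List.ofFn z).zip w.toList ∈ M.accepts <;>
        by_cases hm : List.ofFn x ++ List.ofFn z ∈ IPstar <;>
        simp [ha, hm] <;> norm_num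
    rw [Finset.sum_congr rfl (fun x _ => Finset.sum_congr rfl (fun z _ => hχ x z))]
    have expand : ∑ x : Fin n → Bool, ∑ z : Fin n → Bool, (1 + (βw w) (fw w x) z * sgn x z) / 2
        = H/2 + (1/2) * ∑ x : Fin n → Bool, ∑ z : Fin n → Bool, (βw w) (fw w x) z * sgn x z := by
      simp_rw [add_div, Finset.sum_add_distrib]
      rw [Finset.sum_const, Finset.sum_const, hcardV]
      have : ∀ x : Fin n → Bool, ∑ z : Fin n → Bool, ((βw w) (fw w x) z * sgn x z) / 2
          = (1/2) * ∑ z : Fin n → Bool, (βw w) (fw w x) z * sgn x z := by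
        intro x; rw [Finset.mul_sum]; apply Finset.sum_congr rfl; intros; ring
      rw [Finset.sum_congr rfl (fun x _ => this x), ← Finset.mul_sum]
      simp [hHdef]; ring
    rw [expand, hBdef]
    have hcount := counting (fw w) (βw w) (fun q z => by
      simp only [hβw]; by_cases h : M.evalFrom q ((List.ofFn z).zip (w.toList.drop n)) ∈ M.accept <;>
        simp [h])
    have : Real.sqrt ((K * 2^n) * (2^n*2^n)) = Real.sqrt ((K * 2^n) * H) := by
      rw [hHdef]
    rw [← hHdef] at hcount
    nlinarith [hcount]
  have swap : ∑ x : Fin n → Bool, ∑ z : Fin n → Bool, ∑ w : List.Vector Γ (n+n), (D (n+n) w) *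
      (if (((List.ofFn x ++ List.ofFn z).zip w.toList ∈ M.accepts)
          ↔ (List.ofFn x ++ List.ofFn z ∈ IPstar)) then 1 else 0)
      ≤ B := by
    have comm : ∑ x : Fin n → Bool, ∑ z : Fin n → Bool, ∑ w : List.Vector Γ (n+n), (D (n+n) w) *
        (if (((List.ofFn x ++ List.ofFn z).zip w.toList ∈ M.accepts)
            ↔ (List.ofFn x ++ List.ofFn z ∈ IPstar)) then (1:ℝ) else 0)
        = ∑ w : List.Vector Γ (n+n), ∑ x : Fin n → Bool, ∑ z : Fin n → Bool, (D (n+n) w) *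
        (if (((List.ofFn x ++ List.ofFn z).zip w.toList ∈ M.accepts)
            ↔ (List.ofFn x ++ List.ofFn z ∈ IPstar)) then (1:ℝ) else 0) :=
      (Finset.sum_congr rfl (fun x _ => Finset.sum_comm)).trans Finset.sum_comm
    rw [comm]
    have step : ∀ w : List.Vector Γ (n+n), ∑ x : Fin n → Bool, ∑ z : Fin n → Bool, (D (n+n) w) *
        (if (((List.ofFn x ++ List.ofFn z).zip w.toList ∈ M.accepts)
            ↔ (List.ofFn x ++ List.ofFn z ∈ IPstar)) then (1:ℝ) else 0)
        ≤ (D (n+n) w) * B := by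
      intro w
      have : ∑ x : Fin n → Bool, ∑ z : Fin n → Bool, (D (n+n) w) *
          (if (((List.ofFn x ++ List.ofFn z).zip w.toList ∈ M.accepts)
              ↔ (List.ofFn x ++ List.ofFn z ∈ IPstar)) then (1:ℝ) else 0)
          = (D (n+n) w) * ∑ x : Fin n → Bool, ∑ z : Fin n → Bool,
          (if (((List.ofFn x ++ List.ofFn z).zip w.toList ∈ M.accepts)
              ↔ (List.ofFn x ++ List.ofFn z ∈ IPstar)) then (1:ℝ) else 0) := by
        rw [Finset.mul_sum]
        apply Finset.sum_congr rfl; intro x _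
        rw [Finset.mul_sum]
      rw [this]
      exact mul_le_mul_of_nonneg_left (perw w) ((hD (n+n)).1 w)
    calc ∑ w : List.Vector Γ (n+n), ∑ x : Fin n → Bool, ∑ z : Fin n → Bool, (D (n+n) w) *
        (if (((List.ofFn x ++ List.ofFn z).zip w.toList ∈ M.accepts)
            ↔ (List.ofFn x ++ List.ofFn z ∈ IPstar)) then (1:ℝ) else 0)
        ≤ ∑ w : List.Vector Γ (n+n), (D (n+n) w) * B := Finset.sum_le_sum (fun w _ => step w)
      _ = B := by rw [← Finset.sum_mul, (hD (n+n)).2, one_mul]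
  -- final numeric contradiction
  have hfinal : (1 - ε) * H ≤ B := le_trans total swap
  have hsqrt : Real.sqrt ((K * 2^n) * H) < 2 * δ * H := by
    rw [Real.sqrt_lt' (by positivity)]
    have h2n : (0:ℝ) < 2^n := by positivity
    have hmul := mul_lt_mul_of_pos_right hKn (show (0:ℝ) < 2^n * (2^n * 2^n) by positivity)
    calc ((K:ℝ) * 2^n) * H < (4*δ^2*2^n) * (2^n * (2^n*2^n)) := by
          rw [hHdef]; nlinarith [hmul]
      _ ≤ (2*δ*H)^2 := le_of_eq (by rw [hHdef]; ring)
  have : B < (1-ε) * H := by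
    have h2 : (1 - ε) * H = H/2 + δ * H := by rw [hδdef]; ring
    rw [hBdef, h2]
    have h3 : (1/2) * Real.sqrt ((K*2^n)*H) < (1/2) * (2*δ*H) :=
      mul_lt_mul_of_pos_left hsqrt one_half_pos
    have h4 : (1/2:ℝ) * (2*δ*H) = δ * H := by ring
    rw [h4] at h3
    linarith [h3]
  linarith


lemma innerProd_rev_cons_concat (b c : Bool) (x y : List Bool) (h : x.length = y.length) :
    innerProd (b::x).reverse (y++[c]) = innerProd x.reverse y + (if b && c then 1 else 0) := by
  rw [List.reverse_cons]
  exact innerProd_concat _ _ (by simp [h]) b c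

inductive NTip where
  | S : NTip
  | E : NTip
  | O : NTip
deriving DecidableEq

deriving instance DecidableEq for Symbol
deriving instance DecidableEq for ContextFreeRule

abbrev Sym := Symbol Bool NTip

def rules : List (ContextFreeRule Bool NTip) :=
  [⟨.S, [.nonterminal .E]⟩,
   ⟨.S, [.terminal false, .nonterminal .E]⟩,
   ⟨.S, [.terminal true, .nonterminal .E]⟩,
   ⟨.E, []⟩,
   ⟨.E, [.terminal false, .nonterminal .E, .terminal false]⟩,
   ⟨.E, [.terminal false, .nonterminal .E, .terminal true]⟩,
   ⟨.E, [.terminal true, .nonterminal .E, .terminal false]⟩,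
   ⟨.E, [.terminal true, .nonterminal .O, .terminal true]⟩,
   ⟨.O, [.terminal false, .nonterminal .O, .terminal false]⟩,
   ⟨.O, [.terminal false, .nonterminal .O, .terminal true]⟩,
   ⟨.O, [.terminal true, .nonterminal .O, .terminal false]⟩,
   ⟨.O, [.terminal true, .nonterminal .E, .terminal true]⟩]

abbrev G : ContextFreeGrammar Bool := ⟨NTip, .S, rules.toFinset⟩

def EvL : Set (List Bool) :=
  {w | ∃ x y : List Bool, w = x ++ y ∧ x.length = y.length ∧ innerProd x.reverse y % 2 = 0}

def OdL : Set (List Bool) :=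
  {w | ∃ x y : List Bool, w = x ++ y ∧ x.length = y.length ∧ innerProd x.reverse y % 2 = 1}

lemma EvL_sandwich (b c : Bool) (m : List Bool)
    (h : if b && c then m ∈ OdL else m ∈ EvL) : b :: (m ++ [c]) ∈ EvL := by
  by_cases hbc : (b && c) = true
  · rw [if_pos hbc] at h
    obtain ⟨x, y, rfl, hl, hp⟩ := h
    refine ⟨b::x, y++[c], by simp, by simp [hl], ?_⟩
    rw [innerProd_rev_cons_concat b c x y hl]
    simp only [hbc, if_true]
    omega
  · rw [if_neg hbc] at h
    obtain ⟨x, y, rfl, hl, hp⟩ := h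
    refine ⟨b::x, y++[c], by simp, by simp [hl], ?_⟩
    rw [innerProd_rev_cons_concat b c x y hl, if_neg hbc]
    omega

lemma OdL_sandwich (b c : Bool) (m : List Bool)
    (h : if b && c then m ∈ EvL else m ∈ OdL) : b :: (m ++ [c]) ∈ OdL := by
  by_cases hbc : (b && c) = true
  · rw [if_pos hbc] at h
    obtain ⟨x, y, rfl, hl, hp⟩ := h
    refine ⟨b::x, y++[c], by simp, by simp [hl], ?_⟩
    rw [innerProd_rev_cons_concat b c x y hl]
    simp only [hbc, if_true]
    omega
  · rw [if_neg hbc] at h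
    obtain ⟨x, y, rfl, hl, hp⟩ := h
    refine ⟨b::x, y++[c], by simp, by simp [hl], ?_⟩
    rw [innerProd_rev_cons_concat b c x y hl, if_neg hbc]
    omega

/-- interpretation of a symbol -/
def symL : Sym → Language Bool
  | .terminal b => {[b]}
  | .nonterminal .S => IPstar
  | .nonterminal .E => EvL
  | .nonterminal .O => OdL

/-- interpretation of a sentential form -/
def strL (u : List Sym) : Language Bool := (u.map symL).prod

lemma strL_append (u v : List Sym) : strL (u ++ v) = strL u * strL v := by
  unfold strL
  rw [List.map_append, List.prod_append]

lemma strL_single (s : Sym) : strL [s] = symL s := by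
  unfold strL
  simp

lemma mem_strL_terminal (w : List Bool) : w ∈ strL (w.map Symbol.terminal) := by
  induction w with
  | nil => exact (Language.mem_one _).mpr rfl
  | cons b w ih =>
    have : (b :: w).map Symbol.terminal
        = [Symbol.terminal (N := NTip) b] ++ w.map Symbol.terminal := rfl
    rw [this, strL_append]
    refine ⟨[b], ?_, w, ih, rfl⟩
    rw [strL_single]
    rfl

lemma mul_subset_mul {L1 L2 L3 L4 : Language Bool} (h1 : ∀ w, w ∈ L1 → w ∈ L3)
    (h2 : ∀ w, w ∈ L2 → w ∈ L4) : ∀ w, w ∈ L1 * L2 → w ∈ L3 * L4 := by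
  rintro w ⟨u, hu, v, hv, rfl⟩
  exact ⟨u, h1 u hu, v, h2 v hv, rfl⟩

lemma strL_sandwich (b c : Bool) (X : NTip) :
    strL [.terminal b, .nonterminal X, .terminal c]
      = {[b]} * symL (.nonterminal X) * {[c]} := by
  unfold strL symL
  simp [List.prod_cons]
  rw [mul_assoc]

lemma mem_sandwich {L : Language Bool} (b c : Bool) (w : List Bool)
    (hw : w ∈ ({[b]} : Language Bool) * L * {[c]}) :
    ∃ m ∈ L, w = b :: (m ++ [c]) := by
  obtain ⟨u, hu, v, hv, rfl⟩ := hw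
  obtain ⟨u1, hu1, m, hm, rfl⟩ := hu
  replace hu1 : u1 = [b] := hu1
  replace hv : v = [c] := hv
  subst hu1; subst hv
  exact ⟨m, hm, by simp⟩

lemma rule_sound (r : ContextFreeRule Bool NTip) (hr : r ∈ G.rules) :
    ∀ w, w ∈ strL r.output → w ∈ symL (.nonterminal r.input) := by
  have hr' : r ∈ rules := List.mem_toFinset.mp hr
  fin_cases hr' <;> intro w hw
  -- S → E
  · rw [strL_single] at hw
    obtain ⟨x, y, rfl, hl, hp⟩ := hw
    exact ⟨[], x, y, Or.inl rfl, by simp, hl, hp⟩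
  -- S → 0 E
  · rw [show ([.terminal false, .nonterminal .E] : List Sym)
        = [.terminal false] ++ [.nonterminal .E] from rfl, strL_append,
      strL_single, strL_single] at hw
    obtain ⟨u, hu, v, hv, rfl⟩ := hw
    replace hu : u = [false] := hu
    subst hu
    obtain ⟨x, y, rfl, hl, hp⟩ := hv
    exact ⟨[false], x, y, Or.inr (Or.inl rfl), by simp, hl, hp⟩
  -- S → 1 E
  · rw [show ([.terminal true, .nonterminal .E] : List Sym)
        = [.terminal true] ++ [.nonterminal .E] from rfl, strL_append,
      strL_single, strL_single] at hw
    obtain ⟨u, hu, v, hv, rfl⟩ := hw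
    replace hu : u = [true] := hu
    subst hu
    obtain ⟨x, y, rfl, hl, hp⟩ := hv
    exact ⟨[true], x, y, Or.inr (Or.inr rfl), by simp, hl, hp⟩
  -- E → ε
  · rw [show strL [] = 1 from rfl] at hw
    rw [Language.mem_one] at hw
    subst hw
    exact ⟨[], [], rfl, rfl, by simp [innerProd]⟩
  -- E → 0 E 0
  · rw [strL_sandwich] at hw
    obtain ⟨m, hm, rfl⟩ := mem_sandwich _ _ _ hw
    exact EvL_sandwich false false m (by simp; exact hm)
  · rw [strL_sandwich] at hw
    obtain ⟨m, hm, rfl⟩ := mem_sandwich _ _ _ hw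
    exact EvL_sandwich false true m (by simp; exact hm)
  · rw [strL_sandwich] at hw
    obtain ⟨m, hm, rfl⟩ := mem_sandwich _ _ _ hw
    exact EvL_sandwich true false m (by simp; exact hm)
  · rw [strL_sandwich] at hw
    obtain ⟨m, hm, rfl⟩ := mem_sandwich _ _ _ hw
    exact EvL_sandwich true true m (by simp; exact hm)
  · rw [strL_sandwich] at hw
    obtain ⟨m, hm, rfl⟩ := mem_sandwich _ _ _ hw
    exact OdL_sandwich false false m (by simp; exact hm)
  · rw [strL_sandwich] at hw
    obtain ⟨m, hm, rfl⟩ := mem_sandwich _ _ _ hw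
    exact OdL_sandwich false true m (by simp; exact hm)
  · rw [strL_sandwich] at hw
    obtain ⟨m, hm, rfl⟩ := mem_sandwich _ _ _ hw
    exact OdL_sandwich true false m (by simp; exact hm)
  · rw [strL_sandwich] at hw
    obtain ⟨m, hm, rfl⟩ := mem_sandwich _ _ _ hw
    exact OdL_sandwich true true m (by simp; exact hm)

lemma produces_sound {u v : List Sym} (h : G.Produces u v) :
    ∀ w, w ∈ strL v → w ∈ strL u := by
  obtain ⟨r, hr, hrw⟩ := h
  obtain ⟨p, q, rfl, rfl⟩ := hrw.exists_parts
  rw [strL_append, strL_append, strL_append, strL_append]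
  apply mul_subset_mul
  · apply mul_subset_mul (fun w hw => hw)
    intro w hw
    rw [strL_single]
    exact rule_sound r hr w hw
  · exact fun w hw => hw

lemma derives_sound {u v : List Sym} (h : G.Derives u v) :
    ∀ w, w ∈ strL v → w ∈ strL u := by
  induction h with
  | refl => exact fun w hw => hw
  | tail _ hstep ih => exact fun w hw => ih w (produces_sound hstep w hw)

lemma lang_subset : ∀ w, w ∈ G.language → w ∈ IPstar := by
  intro w hw
  rw [ContextFreeGrammar.mem_language_iff] at hw
  have h1 := derives_sound hw w (mem_strL_terminal w)
  rw [strL_single] at h1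
  exact h1


lemma mem_rules {r : ContextFreeRule Bool NTip} (h : r ∈ rules) : r ∈ G.rules := by
  exact List.mem_toFinset.mpr h

lemma produces_single {X : NTip} {out : List Sym}
    (h : (⟨X, out⟩ : ContextFreeRule Bool NTip) ∈ G.rules) :
    G.Produces [.nonterminal X] out :=
  ⟨_, h, ContextFreeRule.Rewrites.input_output⟩

lemma derives_sandwich {X Y : NTip} (b c : Bool)
    (h : (⟨X, [.terminal b, .nonterminal Y, .terminal c]⟩ : ContextFreeRule Bool NTip) ∈ G.rules)
    {w : List Bool} (hw : G.Derives [.nonterminal Y] (w.map .terminal)) :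
    G.Derives [.nonterminal X] ((b :: (w ++ [c])).map .terminal) := by
  refine (produces_single h).trans_derives ?_
  have h2 := (hw.append_right [Symbol.terminal c]).append_left [Symbol.terminal b]
  have e1 : [Symbol.terminal b] ++ ([Symbol.nonterminal Y] ++ [Symbol.terminal c])
      = ([.terminal b, .nonterminal Y, .terminal c] : List Sym) := rfl
  have e2 : [Symbol.terminal b] ++ (w.map Symbol.terminal ++ [Symbol.terminal c])
      = ((b :: (w ++ [c])).map Symbol.terminal : List Sym) := by simp
  rw [e1, e2] at h2
  exact h2

lemma derives_EO : ∀ x y : List Bool, x.length = y.length →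
    (innerProd x.reverse y % 2 = 0 → G.Derives [.nonterminal .E] ((x++y).map .terminal)) ∧
    (innerProd x.reverse y % 2 = 1 → G.Derives [.nonterminal .O] ((x++y).map .terminal)) := by
  intro x
  induction x with
  | nil =>
    intro y hy
    have hynil : y = [] := by
      have := hy.symm
      simpa [List.length_eq_zero_iff] using this
    subst hynil
    constructor
    · intro _
      exact (produces_single (mem_rules (by simp [rules]))).single
    · intro hodd
      simp [innerProd] at hodd
  | cons b x ih =>
    intro y hy
    rcases y.eq_nil_or_concat with rfl | ⟨y', c, rfl⟩
    · simp at hy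
    · simp only [List.concat_eq_append] at hy ⊢
      have hl : x.length = y'.length := by
        simp [List.length_append] at hy
        omega
      have hpar := innerProd_rev_cons_concat b c x y' hl
      have ihy := ih y' hl
      have heq : ((b::x) ++ (y'++[c])) = b :: ((x ++ y') ++ [c]) := by simp
      constructor
      · intro hev
        rw [heq]
        rw [hpar] at hev
        by_cases hbc : (b && c) = true
        · simp only [hbc, if_true] at hev
          have hodd : innerProd x.reverse y' % 2 = 1 := by omega
          obtain ⟨hb, hc⟩ := Bool.and_eq_true_iff.mp hbc
          subst hb; subst hc
          exact derives_sandwich true true (mem_rules (by simp [rules])) (ihy.2 hodd)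
        · simp only [if_neg hbc] at hev
          have hevi : innerProd x.reverse y' % 2 = 0 := by omega
          have hder := ihy.1 hevi
          cases b <;> cases c
          · exact derives_sandwich false false (mem_rules (by simp [rules])) hder
          · exact derives_sandwich false true (mem_rules (by simp [rules])) hder
          · exact derives_sandwich true false (mem_rules (by simp [rules])) hder
          · simp at hbc
      · intro hod
        rw [heq]
        rw [hpar] at hod
        by_cases hbc : (b && c) = true
        · simp only [hbc, if_true] at hod
          have hevi : innerProd x.reverse y' % 2 = 0 := by omega
          obtain ⟨hb, hc⟩ := Bool.and_eq_true_iff.mp hbc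
          subst hb; subst hc
          exact derives_sandwich true true (mem_rules (by simp [rules])) (ihy.1 hevi)
        · simp only [if_neg hbc] at hod
          have hodd : innerProd x.reverse y' % 2 = 1 := by omega
          have hder := ihy.2 hodd
          cases b <;> cases c
          · exact derives_sandwich false false (mem_rules (by simp [rules])) hder
          · exact derives_sandwich false true (mem_rules (by simp [rules])) hder
          · exact derives_sandwich true false (mem_rules (by simp [rules])) hder
          · simp at hbc

lemma lang_complete : ∀ z ∈ IPstar, G.Derives [.nonterminal .S] (z.map .terminal) := by
  rintro z ⟨a, x, y, ha, rfl, hl, hp⟩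
  have hE := (derives_EO x y hl).1 hp
  rcases ha with rfl | rfl | rfl
  · rw [List.nil_append]
    exact (produces_single (mem_rules (by simp [rules]))).trans_derives hE
  · have heq : (([false] ++ x ++ y) : List Bool) = false :: (x ++ y) := by simp
    rw [heq]
    refine (produces_single (X := .S) (out := [.terminal false, .nonterminal .E])
      (mem_rules (by simp [rules]))).trans_derives ?_
    have h2 := hE.append_left [Symbol.terminal false]
    have e2 : [Symbol.terminal false] ++ (x++y).map Symbol.terminal
        = ((false :: (x ++ y)).map Symbol.terminal : List Sym) := by simp
    rw [e2] at h2
    exact h2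
  · have heq : (([true] ++ x ++ y) : List Bool) = true :: (x ++ y) := by simp
    rw [heq]
    refine (produces_single (X := .S) (out := [.terminal true, .nonterminal .E])
      (mem_rules (by simp [rules]))).trans_derives ?_
    have h2 := hE.append_left [Symbol.terminal true]
    have e2 : [Symbol.terminal true] ++ (x++y).map Symbol.terminal
        = ((true :: (x ++ y)).map Symbol.terminal : List Sym) := by simp
    rw [e2] at h2
    exact h2

theorem G_lang : G.language = IPstar :=
  Set.ext fun w => ⟨lang_subset w, fun hw =>
    (ContextFreeGrammar.mem_language_iff G w).mpr (lang_complete w hw)⟩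

theorem IPstar_isCF : IPstar.IsContextFree := ⟨G, G_lang⟩


end IPAux

theorem stmt14 : IPstar.IsContextFree ∧ ¬ InREGRn IPstar :=
  ⟨IPAux.IPstar_isCF, IPAux.not_REGRn⟩
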